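/- arXiv:2001.11355 — 3 statements merged into one kernel-verified Lean document; each statement's English description precedes it below -/
import Mathlib

section
/- Let g be applied entrywise to matrices, P and Q be K×K block matrices with diagonal blocks A, C and off-diagonal blocks B, D respectively, and Λ a block permutation matrix. Then Λᵀ · g(P H Qᵀ) · Λ = g(P (Λᵀ H Λ) Qᵀ) for every matrix H of compatible block dimensions. -/
open Matrix Kronecker

/-- Hidden-layer equivariance step in the proof of Proposition 4:
`Λᵀ g(P H Qᵀ) Λ = g(P (Λᵀ H Λ) Qᵀ)` for entrywise `g` and the shared-parameter `P`, `Q`. -/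
theorem stmt_10 {K N₁ N₂ M₁ M₂ : ℕ} (σ : Equiv.Perm (Fin K)) (g : ℝ → ℝ)
    (A B : Matrix (Fin M₁) (Fin N₁) ℝ) (C D : Matrix (Fin M₂) (Fin N₂) ℝ)
    (H : Matrix (Fin K × Fin N₁) (Fin K × Fin N₂) ℝ) :
    let Λσ : Matrix (Fin K) (Fin K) ℝ := Matrix.of fun i j => if i = σ j then 1 else 0
    let P : Matrix (Fin K × Fin M₁) (Fin K × Fin N₁) ℝ :=
      Matrix.of fun p q => if p.1 = q.1 then A p.2 q.2 else B p.2 q.2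
    let Q : Matrix (Fin K × Fin M₂) (Fin K × Fin N₂) ℝ :=
      Matrix.of fun p q => if p.1 = q.1 then C p.2 q.2 else D p.2 q.2
    (Λσ ⊗ₖ (1 : Matrix (Fin M₁) (Fin M₁) ℝ))ᵀ * ((P * H * Qᵀ).map g) *
        (Λσ ⊗ₖ (1 : Matrix (Fin M₂) (Fin M₂) ℝ)) =
      (P * ((Λσ ⊗ₖ (1 : Matrix (Fin N₁) (Fin N₁) ℝ))ᵀ * H *
        (Λσ ⊗ₖ (1 : Matrix (Fin N₂) (Fin N₂) ℝ))) * Qᵀ).map g := by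
  intro Λσ P Q
  -- Conjugation by Λσ ⊗ 1 is reindexing by the equiv (i, m) ↦ (σ i, m).
  have hconj : ∀ (m₁ m₂ : ℕ) (M : Matrix (Fin K × Fin m₁) (Fin K × Fin m₂) ℝ),
      (Λσ ⊗ₖ (1 : Matrix (Fin m₁) (Fin m₁) ℝ))ᵀ * M *
          (Λσ ⊗ₖ (1 : Matrix (Fin m₂) (Fin m₂) ℝ)) =
        M.submatrix (fun p => (σ p.1, p.2)) (fun p => (σ p.1, p.2)) := by
    intro m₁ m₂ M
    ext ⟨i, a⟩ ⟨j, b⟩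
    simp [Matrix.mul_apply, Λσ, Fintype.sum_prod_type, Matrix.one_apply, ite_and,
      Finset.sum_ite_eq, Finset.sum_ite_eq']
  rw [hconj, hconj]
  set e : Fin K × Fin N₁ ≃ Fin K × Fin N₁ := (σ.prodCongr (Equiv.refl (Fin N₁)))
  set e' : Fin K × Fin N₂ ≃ Fin K × Fin N₂ := (σ.prodCongr (Equiv.refl (Fin N₂)))
  set f : Fin K × Fin M₁ ≃ Fin K × Fin M₁ := (σ.prodCongr (Equiv.refl (Fin M₁)))
  set f' : Fin K × Fin M₂ ≃ Fin K × Fin M₂ := (σ.prodCongr (Equiv.refl (Fin M₂)))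
  have hP : P.submatrix f e = P := by
    ext ⟨i, a⟩ ⟨k, n⟩
    simp [P, e, f, Equiv.prodCongr]
  have hQ : Q.submatrix f' e' = Q := by
    ext ⟨i, a⟩ ⟨k, n⟩
    simp [Q, e', f', Equiv.prodCongr]
  have key : (P * H * Qᵀ).submatrix f f' =
      P * (H.submatrix e e') * Qᵀ := by
    rw [← Matrix.submatrix_mul_equiv (P * H) Qᵀ (f : Fin K × Fin M₁ → Fin K × Fin M₁) e' f',
      ← Matrix.submatrix_mul_equiv P H (f : Fin K × Fin M₁ → Fin K × Fin M₁) e e',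
      hP]
    congr 1
    exact congrArg Matrix.transpose hQ
  show ((P * H * Qᵀ).map g).submatrix (f : _ → _) (f' : _ → _) =
    (P * H.submatrix (e : _ → _) (e' : _ → _) * Qᵀ).map g
  rw [Matrix.submatrix_map, key]
end

section
/- The full PINN-2D map y = diag(g^{[L]}(P^{[L]} g^{[L−1]}(⋯ g^{[2]}(P^{[2]} X (Q^{[2]})ᵀ)⋯) (Q^{[L]})ᵀ)), with each P^{[l]}, Q^{[l]} having the diagonal/off-diagonal two-sub-matrix block structure and g^{[l]} applied entrywise, is 2D permutation equivariant: replacing X by Λᵀ X Λ replaces y by Λᵀ y for every block permutation matrix Λ. -/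
open Matrix Kronecker

/-- Apply the layers `(P, Q, g)` of a PINN-2D, each acting as `H ↦ g(P H Qᵀ)`; the last list
element is the first layer. -/
def applyLayers2D {K N : ℕ} :
    List (Matrix (Fin K × Fin N) (Fin K × Fin N) ℝ ×
      Matrix (Fin K × Fin N) (Fin K × Fin N) ℝ × (ℝ → ℝ)) →
      Matrix (Fin K × Fin N) (Fin K × Fin N) ℝ →
      Matrix (Fin K × Fin N) (Fin K × Fin N) ℝ
  | [], X => X
  | (P, Q, g) :: rest, X => (P * (applyLayers2D rest X) * Qᵀ).map g

section Aux
variable {K N : ℕ}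

def Lam (σ : Equiv.Perm (Fin K)) : Matrix (Fin K × Fin N) (Fin K × Fin N) ℝ :=
  (Matrix.of fun i j => if i = σ j then (1:ℝ) else 0) ⊗ₖ (1 : Matrix (Fin N) (Fin N) ℝ)

lemma Lam_apply (σ : Equiv.Perm (Fin K)) (p q : Fin K × Fin N) :
    Lam (N := N) σ p q = if p.1 = σ q.1 ∧ p.2 = q.2 then 1 else 0 := by
  simp [Lam, Matrix.one_apply, ite_and]
  split <;> simp

lemma mul_Lam (σ : Equiv.Perm (Fin K)) (M : Matrix (Fin K × Fin N) (Fin K × Fin N) ℝ)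
    (p q : Fin K × Fin N) : (M * (Lam (N := N) σ)) p q = M p (σ q.1, q.2) := by
  rw [Matrix.mul_apply]
  rw [Finset.sum_eq_single (σ q.1, q.2)]
  · simp [Lam_apply]
  · intro r _ hr
    rw [Lam_apply]
    rw [if_neg, mul_zero]
    rintro ⟨h1, h2⟩; exact hr (Prod.ext h1 h2)
  · simp

lemma Lam_mul (σ : Equiv.Perm (Fin K)) (M : Matrix (Fin K × Fin N) (Fin K × Fin N) ℝ)
    (p q : Fin K × Fin N) : ((Lam (N := N) σ) * M) p q = M (σ.symm p.1, p.2) q := by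
  rw [Matrix.mul_apply]
  rw [Finset.sum_eq_single (σ.symm p.1, p.2)]
  · simp [Lam_apply]
  · intro r _ hr
    rw [Lam_apply]
    rw [if_neg, zero_mul]
    rintro ⟨h1, h2⟩
    exact hr (Prod.ext (by simp [h1]) h2.symm)
  · simp

lemma LamT_mul (σ : Equiv.Perm (Fin K)) (M : Matrix (Fin K × Fin N) (Fin K × Fin N) ℝ)
    (p q : Fin K × Fin N) : (((Lam (N := N) σ))ᵀ * M) p q = M (σ p.1, p.2) q := by
  rw [Matrix.mul_apply]
  rw [Finset.sum_eq_single (σ p.1, p.2)]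
  · simp [Lam_apply]
  · intro r _ hr
    rw [Matrix.transpose_apply, Lam_apply]
    rw [if_neg, zero_mul]
    rintro ⟨h1, h2⟩; exact hr (Prod.ext h1 h2)
  · simp

lemma conj_entry (σ : Equiv.Perm (Fin K)) (M : Matrix (Fin K × Fin N) (Fin K × Fin N) ℝ)
    (p q : Fin K × Fin N) :
    (((Lam (N := N) σ))ᵀ * M * (Lam (N := N) σ)) p q = M (σ p.1, p.2) (σ q.1, q.2) := by
  rw [mul_Lam, LamT_mul]

lemma shared_comm (σ : Equiv.Perm (Fin K)) (A B : Matrix (Fin N) (Fin N) ℝ) :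
    (Matrix.of fun (p q : Fin K × Fin N) => if p.1 = q.1 then A p.2 q.2 else B p.2 q.2) * (Lam (N := N) σ)
    = (Lam (N := N) σ) * (Matrix.of fun p q => if p.1 = q.1 then A p.2 q.2 else B p.2 q.2) := by
  ext p q
  rw [mul_Lam, Lam_mul]
  simp only [Matrix.of_apply]
  congr 1
  simp [eq_comm, Equiv.eq_symm_apply, Equiv.symm_apply_eq]

lemma Lam_mul_LamT (σ : Equiv.Perm (Fin K)) :
    (Lam (N := N) σ) * (Lam (N := N) σ)ᵀ = 1 := by
  ext p q
  rw [Lam_mul, Matrix.transpose_apply, Lam_apply, Matrix.one_apply]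
  simp [Prod.ext_iff, eq_comm]

lemma LamT_mul_Lam (σ : Equiv.Perm (Fin K)) :
    (Lam (N := N) σ)ᵀ * (Lam (N := N) σ) = 1 := by
  ext p q
  rw [LamT_mul, Lam_apply, Matrix.one_apply]
  simp [Prod.ext_iff]

lemma shared_comm_T (σ : Equiv.Perm (Fin K)) (A B : Matrix (Fin N) (Fin N) ℝ) :
    (Matrix.of fun (p q : Fin K × Fin N) => if p.1 = q.1 then A p.2 q.2 else B p.2 q.2)
      * (Lam (N := N) σ)ᵀ
    = (Lam (N := N) σ)ᵀ
      * (Matrix.of fun p q => if p.1 = q.1 then A p.2 q.2 else B p.2 q.2) := by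
  set P : Matrix (Fin K × Fin N) (Fin K × Fin N) ℝ :=
    Matrix.of fun p q => if p.1 = q.1 then A p.2 q.2 else B p.2 q.2 with hP
  have h := shared_comm σ A B
  rw [← hP] at h
  calc P * (Lam (N := N) σ)ᵀ
      = ((Lam (N := N) σ)ᵀ * (Lam (N := N) σ)) * P * (Lam (N := N) σ)ᵀ := by
        rw [LamT_mul_Lam, one_mul]
    _ = (Lam (N := N) σ)ᵀ * (P * (Lam (N := N) σ)) * (Lam (N := N) σ)ᵀ := by
        rw [h]; noncomm_ring
    _ = (Lam (N := N) σ)ᵀ * P := by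
        rw [mul_assoc, mul_assoc, Lam_mul_LamT, mul_one]

lemma applyLayers_conj (σ : Equiv.Perm (Fin K))
    (layers : List (Matrix (Fin K × Fin N) (Fin K × Fin N) ℝ ×
      Matrix (Fin K × Fin N) (Fin K × Fin N) ℝ × (ℝ → ℝ)))
    (hshared : ∀ PQg ∈ layers,
      (∃ A B : Matrix (Fin N) (Fin N) ℝ,
        PQg.1 = Matrix.of fun p q => if p.1 = q.1 then A p.2 q.2 else B p.2 q.2) ∧
      (∃ C D : Matrix (Fin N) (Fin N) ℝ,
        PQg.2.1 = Matrix.of fun p q => if p.1 = q.1 then C p.2 q.2 else D p.2 q.2))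
    (X : Matrix (Fin K × Fin N) (Fin K × Fin N) ℝ) :
    applyLayers2D layers ((Lam (N := N) σ)ᵀ * X * (Lam (N := N) σ)) =
      (Lam (N := N) σ)ᵀ * (applyLayers2D layers X) * (Lam (N := N) σ) := by
  induction layers with
  | nil => rfl
  | cons PQg rest ih =>
    obtain ⟨P, Q, g⟩ := PQg
    obtain ⟨⟨A, B, hPAB⟩, ⟨C, D, hQCD⟩⟩ := hshared _ List.mem_cons_self
    simp only at hPAB hQCD
    have ih' := ih (fun x hx => hshared x (List.mem_cons_of_mem _ hx))
    show (P * _ * Qᵀ).map g = _ * (P * _ * Qᵀ).map g * _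
    rw [ih']
    have hQT : Qᵀ * (Lam (N := N) σ) = (Lam (N := N) σ) * Qᵀ := by
      have hQT' : Qᵀ = Matrix.of fun (p q : Fin K × Fin N) =>
          if p.1 = q.1 then Cᵀ p.2 q.2 else Dᵀ p.2 q.2 := by
        rw [hQCD]; ext p q; simp [Matrix.transpose_apply, eq_comm]
      rw [hQT']
      exact shared_comm σ Cᵀ Dᵀ
    have hP : P * (Lam (N := N) σ)ᵀ = (Lam (N := N) σ)ᵀ * P := by
      rw [hPAB]; exact shared_comm_T σ A B
    have key : P * ((Lam (N := N) σ)ᵀ * applyLayers2D rest X * (Lam (N := N) σ)) * Qᵀ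
        = (Lam (N := N) σ)ᵀ * (P * applyLayers2D rest X * Qᵀ) * (Lam (N := N) σ) := by
      calc P * ((Lam (N := N) σ)ᵀ * applyLayers2D rest X * (Lam (N := N) σ)) * Qᵀ
          = (P * (Lam (N := N) σ)ᵀ) * applyLayers2D rest X * ((Lam (N := N) σ) * Qᵀ) := by
            noncomm_ring
        _ = ((Lam (N := N) σ)ᵀ * P) * applyLayers2D rest X * (Qᵀ * (Lam (N := N) σ)) := by
            rw [hP, hQT]
        _ = (Lam (N := N) σ)ᵀ * (P * applyLayers2D rest X * Qᵀ) * (Lam (N := N) σ) := by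
            noncomm_ring
    rw [key]
    ext p q
    rw [Matrix.map_apply, conj_entry, conj_entry, Matrix.map_apply]

end Aux

/-- Proposition 4: the full PINN-2D map
`y = diag(g^{[L]}(P^{[L]} ⋯ g^{[2]}(P^{[2]} X (Q^{[2]})ᵀ) ⋯ (Q^{[L]})ᵀ))`,
where every `P^{[l]}` and `Q^{[l]}` has the shared two-sub-matrix block structure of
equation (11), is 2D permutation equivariant: replacing `X` by `Λᵀ X Λ` replaces the vector of
diagonal blocks `y` by its `σ`-permutation `Λᵀ y`. -/
theorem stmt_12 {K N : ℕ}
    (layers : List (Matrix (Fin K × Fin N) (Fin K × Fin N) ℝ ×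
      Matrix (Fin K × Fin N) (Fin K × Fin N) ℝ × (ℝ → ℝ)))
    (hshared : ∀ PQg ∈ layers,
      (∃ A B : Matrix (Fin N) (Fin N) ℝ,
        PQg.1 = Matrix.of fun p q => if p.1 = q.1 then A p.2 q.2 else B p.2 q.2) ∧
      (∃ C D : Matrix (Fin N) (Fin N) ℝ,
        PQg.2.1 = Matrix.of fun p q => if p.1 = q.1 then C p.2 q.2 else D p.2 q.2))
    (σ : Equiv.Perm (Fin K)) (X : Matrix (Fin K × Fin N) (Fin K × Fin N) ℝ) :
    let Λσ : Matrix (Fin K) (Fin K) ℝ := Matrix.of fun i j => if i = σ j then 1 else 0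
    let Λ : Matrix (Fin K × Fin N) (Fin K × Fin N) ℝ :=
      Λσ ⊗ₖ (1 : Matrix (Fin N) (Fin N) ℝ)
    let diagBlocks : Matrix (Fin K × Fin N) (Fin K × Fin N) ℝ →
        (Fin K → Matrix (Fin N) (Fin N) ℝ) :=
      fun M k => Matrix.of fun i j => M (k, i) (k, j)
    diagBlocks (applyLayers2D layers (Λᵀ * X * Λ)) =
      fun k => diagBlocks (applyLayers2D layers X) (σ k) := by
  intro Λσ Λ diagBlocks
  have hΛ : Λ = Lam (N := N) σ := rfl
  funext k
  ext i j
  show (applyLayers2D layers (Λᵀ * X * Λ)) (k, i) (k, j)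
      = (applyLayers2D layers X) (σ k, i) (σ k, j)
  rw [hΛ, applyLayers_conj σ layers hshared X, conj_entry]
end

section
/- Let f : (Fin K → α) → (Fin K → β) be 1D permutation equivariant and suppose K ≥ 2. If x and x' agree in the k-th block (x_k = x'_k) and the multisets of remaining blocks agree ({x_n : n ≠ k} = {x'_n : n ≠ k} as multisets), then (f x)_k = (f x')_k. -/
lemma aux_exists_perm {ι α : Type*} [DecidableEq ι] (s : Finset ι) :
    ∀ g g' : ι → α, s.val.map g = s.val.map g' →
      ∃ e : Equiv.Perm ι, (∀ i ∉ s, e i = i) ∧ ∀ i ∈ s, g (e i) = g' i := by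
  classical
  induction s using Finset.induction with
  | empty =>
      intro g g' _
      exact ⟨Equiv.refl ι, fun i _ => rfl, fun i hi => absurd hi (by simp)⟩
  | @insert a s ha ih =>
      intro g g' h
      have hmem : g' a ∈ (insert a s : Finset ι).val.map g := by
        rw [h]
        exact Multiset.mem_map_of_mem _ (by simp)
      obtain ⟨b, hb, hgb⟩ := Multiset.mem_map.1 hmem
      have hb' : b ∈ (insert a s : Finset ι) := hb
      set τ := Equiv.swap a b with hτ
      have hmapτ : (insert a s : Finset ι).val.map (g ∘ τ) =
          (insert a s : Finset ι).val.map g := by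
        have hmapval : Multiset.map (⇑τ) (insert a s : Finset ι).val
            = (insert a s : Finset ι).val := by
          have hset : (insert a s : Finset ι).map (Equiv.toEmbedding τ) = insert a s := by
            apply Finset.map_perm
            intro i hi
            simp only [Set.mem_setOf_eq, hτ] at hi
            rcases eq_or_ne i a with rfl | hia
            · exact Finset.mem_insert_self _ _
            · rcases eq_or_ne i b with rfl | hib
              · exact hb'
              · exact absurd (Equiv.swap_apply_of_ne_of_ne hia hib) hi
          have := congrArg Finset.val hset
          rw [Finset.map_val] at this
          simpa only [Equiv.coe_toEmbedding] using this
        calc (insert a s : Finset ι).val.map (g ∘ τ)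
            = (Multiset.map (⇑τ) (insert a s : Finset ι).val).map g := by
              rw [Multiset.map_map]
          _ = (insert a s : Finset ι).val.map g := by rw [hmapval]
      have hval : (insert a s : Finset ι).val = a ::ₘ s.val :=
        Finset.insert_val_of_notMem ha
      have hcancel : s.val.map (g ∘ τ) = s.val.map g' := by
        have h2 : (insert a s : Finset ι).val.map (g ∘ τ)
            = (insert a s : Finset ι).val.map g' := hmapτ.trans h
        rw [hval, Multiset.map_cons, Multiset.map_cons] at h2
        have hga : (g ∘ τ) a = g' a := by simp [hτ, hgb]
        rw [hga] at h2
        exact (Multiset.cons_inj_right _).1 h2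
      obtain ⟨e, he1, he2⟩ := ih (g ∘ τ) g' hcancel
      refine ⟨e.trans τ, ?_, ?_⟩
      · intro i hi
        have hia : i ≠ a := fun h' => hi (h' ▸ Finset.mem_insert_self a s)
        have his : i ∉ s := fun h' => hi (Finset.mem_insert_of_mem h')
        have hib : i ≠ b := fun h' => hi (h' ▸ hb')
        simp [he1 i his, hτ, Equiv.swap_apply_of_ne_of_ne hia hib]
      · intro i hi
        rcases Finset.mem_insert.1 hi with rfl | hi
        · simp [he1 i ha, hτ, hgb]
        · simpa using he2 i hi

/-- Observation (ii) after Proposition 1: for a 1D permutation equivariant `f`, the `k`-th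
output block does not differentiate the order of the other input blocks. -/
theorem stmt_14 {α β : Type*} {K : ℕ} (hK : 2 ≤ K)
    (f : (Fin K → α) → (Fin K → β))
    (hf : ∀ (σ : Equiv.Perm (Fin K)) (x : Fin K → α), f (x ∘ σ) = (f x) ∘ σ)
    (x x' : Fin K → α) (k : Fin K)
    (hk : x k = x' k)
    (hrest : (Finset.univ.erase k).val.map x = (Finset.univ.erase k).val.map x') :
    f x k = f x' k := by
  obtain ⟨e, he1, he2⟩ := aux_exists_perm (Finset.univ.erase k) x x' hrest
  have hek : e k = k := he1 k (by simp)
  have hxe : x ∘ e = x' := by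
    funext i
    by_cases hi : i = k
    · subst hi; simp [hek, hk]
    · exact he2 i (by simp [hi])
  calc f x k = f x (e k) := by rw [hek]
    _ = (f x ∘ e) k := rfl
    _ = f (x ∘ e) k := by rw [hf e x]
    _ = f x' k := by rw [hxe]
end
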